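/- Let $X$ be a Banach space with $X^* = \ell_1$ isometrically, and suppose there exist a subsequence $\{e_{n_k}^*\}$ of the standard basis of $\ell_1$ and $e^* \in S_{\ell_1}$ with $e_{n_k}^* \to e^*$ in $\sigma(\ell_1, X)$ and $e^*(n_k) \ge 0$ for all $k$. Then the set $C = \overline{\mathrm{conv}}^{w^*}\{e^*, e_{n_1}^*, e_{n_2}^*, \ldots\}$ is contained in the unit sphere $S_{\ell_1}$. -/

import Mathlib

open Filter Topology ENNReal NormedSpace

noncomputable section

instance : Fact ((1:ℝ≥0∞) ≤ 1) := ⟨le_rfl⟩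

/-- The space `ℓ₁` of absolutely summable real sequences. -/
abbrev ell1 : Type := lp (fun _ : ℕ => ℝ) 1

/-- The standard unit vector basis of `ℓ₁`. -/
def basisv (i : ℕ) : ell1 := lp.single 1 i (1:ℝ)

/-- The weak-star topology `σ(ℓ₁, X)` on `ℓ₁` induced by a predual `X` via an
isometric identification `e` of the dual of `X` with `ℓ₁`. -/
def wstar (X : Type*) [NormedAddCommGroup X] [NormedSpace ℝ X]
    (e : StrongDual ℝ X ≃ₗᵢ[ℝ] ell1) : TopologicalSpace ell1 :=
  TopologicalSpace.induced (fun y => StrongDual.toWeakDual (e.symm y)) inferInstance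

/-- The weak-star topology `σ(Y*, Y)` on the dual of a normed space `Y`. -/
def wsDual (Y : Type*) [NormedAddCommGroup Y] [NormedSpace ℝ Y] :
    TopologicalSpace (StrongDual ℝ Y) :=
  TopologicalSpace.induced (fun φ : StrongDual ℝ Y => StrongDual.toWeakDual φ)
    inferInstance

lemma basisv_apply (i j : ℕ) : (basisv i) j = if j = i then 1 else 0 := by
  by_cases h : j = i
  · subst h; simp [basisv, lp.single_apply_self]
  · simp [basisv, lp.single_apply_ne _ _ _ h, h]

lemma norm_basisv (i : ℕ) : ‖basisv i‖ = 1 := by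
  have := lp.norm_single (p := (1:ℝ≥0∞)) (E := fun _ : ℕ => ℝ) (by norm_num) i (1:ℝ)
  simpa [basisv] using this

/-- key norm computation in ℓ¹ -/
lemma norm_combo (n : ℕ → ℕ) (hinj : Function.Injective n) (estar : ell1)
    (hnorm : ‖estar‖ = 1) (hpos : ∀ k, 0 ≤ estar (n k)) {α : ℝ} (hα : 0 ≤ α) (N : ℕ)
    {c : ℕ → ℝ} (hc : ∀ k, 0 ≤ c k) :
    ‖α • estar + ∑ k ∈ Finset.range N, c k • basisv (n k)‖
      = α + ∑ k ∈ Finset.range N, c k := by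
  classical
  set x : ell1 := α • estar + ∑ k ∈ Finset.range N, c k • basisv (n k) with hxdef
  have hxapp : ∀ j, x j = α * estar j + ∑ k ∈ Finset.range N, (if j = n k then c k else 0) := by
    intro j
    have : x j = α * estar j + ∑ k ∈ Finset.range N, c k * (basisv (n k)) j := by
      rw [hxdef, lp.coeFn_add, lp.coeFn_smul, lp.coeFn_sum, Pi.add_apply, Pi.smul_apply, Finset.sum_apply]
      simp only [lp.coeFn_smul, Pi.smul_apply, smul_eq_mul]
    rw [this]
    congr 1
    refine Finset.sum_congr rfl fun k _ => ?_
    rw [basisv_apply, mul_ite, mul_one, mul_zero]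
  have key : ∀ j, ‖x j‖ = α * ‖estar j‖ + ∑ k ∈ Finset.range N, (if j = n k then c k else 0) := by
    intro j
    rw [hxapp j]
    by_cases h : ∃ k, k ∈ Finset.range N ∧ n k = j
    · obtain ⟨k0, hk0, hk0j⟩ := h
      have hsum : ∀ (d : ℕ → ℝ), ∑ k ∈ Finset.range N, (if j = n k then d k else 0) = d k0 := by
        intro d
        rw [Finset.sum_eq_single k0]
        · simp [hk0j]
        · intro k hk hne
          have : j ≠ n k := by
            rw [← hk0j]; exact fun hh => hne (hinj hh.symm)
          simp [this]
        · intro h; exact absurd hk0 h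
      rw [hsum]
      have hes : 0 ≤ estar j := hk0j ▸ hpos k0
      have h1 : (0:ℝ) ≤ α * estar j + c k0 :=
        add_nonneg (mul_nonneg hα hes) (hc k0)
      rw [Real.norm_eq_abs, abs_of_nonneg h1, Real.norm_eq_abs, abs_of_nonneg hes]
    · push_neg at h
      have hsum : ∀ (d : ℕ → ℝ), ∑ k ∈ Finset.range N, (if j = n k then d k else 0) = 0 := by
        intro d
        refine Finset.sum_eq_zero fun k hk => ?_
        have : j ≠ n k := fun hh => (h k hk) hh.symm
        simp [this]
      rw [hsum, add_zero, add_zero, Real.norm_eq_abs, Real.norm_eq_abs, abs_mul,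
        abs_of_nonneg hα]
  -- HasSum computations
  have h1 : HasSum (fun j => ‖estar j‖) 1 := by
    have := lp.hasSum_norm (p := (1:ℝ≥0∞)) (by norm_num) estar
    simpa [hnorm] using this
  have h2 : HasSum (fun j => α * ‖estar j‖) α := by
    simpa using h1.mul_left α
  have h3 : HasSum (fun j => ∑ k ∈ Finset.range N, (if j = n k then c k else 0))
      (∑ k ∈ Finset.range N, c k) :=
    hasSum_sum fun k _ => hasSum_ite_eq (n k) (c k)
  have h4 : HasSum (fun j => ‖x j‖) (α + ∑ k ∈ Finset.range N, c k) := by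
    have := h2.add h3
    simpa [key] using this
  have h5 : HasSum (fun j => ‖x j‖) ‖x‖ := by
    have := lp.hasSum_norm (p := (1:ℝ≥0∞)) (by norm_num) x
    simpa using this
  exact h5.unique h4

lemma opnorm_le_of_forall_le {X : Type*} [NormedAddCommGroup X] [NormedSpace ℝ X]
    {F : X →L[ℝ] ℝ} {c : ℝ} (hc : 0 ≤ c) (h : ∀ v : X, ‖v‖ ≤ 1 → F v ≤ c) : ‖F‖ ≤ c := by
  apply F.opNorm_le_bound hc
  intro v
  rcases eq_or_ne v 0 with rfl | hv
  · simp
  · have hvn : 0 < ‖v‖ := norm_pos_iff.2 hv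
    set u : X := ‖v‖⁻¹ • v with hu
    have hun : ‖u‖ ≤ 1 := by
      rw [hu, norm_smul, norm_inv, norm_norm, inv_mul_cancel₀ hvn.ne']
    have h1 : F u ≤ c := h u hun
    have h2 : F (-u) ≤ c := h (-u) (by simpa using hun)
    have habs : |F u| ≤ c := abs_le.2 ⟨by simp at h2; linarith, h1⟩
    have hFv : F v = ‖v‖ * F u := by
      rw [hu, map_smul, smul_eq_mul, ← mul_assoc, mul_inv_cancel₀ hvn.ne', one_mul]
    rw [Real.norm_eq_abs, hFv, abs_mul, abs_of_nonneg hvn.le, mul_comm c ‖v‖]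
    exact mul_le_mul_of_nonneg_left habs hvn.le

lemma aux_arith (L' u' δ' : ℝ) (hδ' : 0 < δ') (hL' : 0 < L') (hle : L' ≤ -u')
    (hall : ∀ t, 0 < t → -u' < (1-δ'+t)*L') : False := by
  have h2 : -u' ≤ (1-δ') * L' := by
    by_contra hcon
    push_neg at hcon
    have hd : 0 < -u' - (1-δ')*L' := by linarith
    have ht : 0 < (-u' - (1-δ')*L')/(2*L') := div_pos hd (by linarith)
    have h3 := hall _ ht
    have h4 : (1-δ'+(-u' - (1-δ')*L')/(2*L'))*L' = (1-δ')*L' + (-u' - (1-δ')*L')/2 := by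
      field_simp
    rw [h4] at h3
    linarith
  nlinarith [mul_pos hδ' hL']

lemma exists_good_v (X : Type*) [NormedAddCommGroup X] [NormedSpace ℝ X]
    (e : StrongDual ℝ X ≃ₗᵢ[ℝ] ell1) (n : ℕ → ℕ) (hinj : Function.Injective n)
    (estar : ell1) (hnorm : ‖estar‖ = 1) (hpos : ∀ k, 0 ≤ estar (n k))
    {δ : ℝ} (hδ : 0 < δ) (N : ℕ) :
    ∃ v : X, ‖v‖ ≤ 1 ∧ 1 - δ ≤ (e.symm estar) v ∧
      ∀ k < N, 1 - δ ≤ (e.symm (basisv (n k))) v := by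
  classical
  set a : StrongDual ℝ X := e.symm estar with ha
  set b : ℕ → StrongDual ℝ X := fun k => e.symm (basisv (n k)) with hb
  set f : Fin (N+1) → StrongDual ℝ X := fun i => Fin.cases a (fun j => b j) i with hf
  have hf0 : f 0 = a := by simp [hf]
  have hfs : ∀ j : Fin N, f j.succ = b j := fun j => by simp [hf]
  set T : X →ₗ[ℝ] (Fin (N+1) → ℝ) := LinearMap.pi (fun i => (f i).toLinearMap) with hT
  set S : Set (Fin (N+1) → ℝ) := T '' (Metric.closedBall 0 1) with hS
  set O : Set (Fin (N+1) → ℝ) := Set.univ.pi (fun _ => Set.Ioi (1-δ)) with hO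
  have hOconv : Convex ℝ O := convex_pi (fun i _ => convex_Ioi _)
  have hOopen : IsOpen O := isOpen_set_pi Set.finite_univ (fun i _ => isOpen_Ioi)
  have hSconv : Convex ℝ S := (convex_closedBall (0:X) 1).linear_image T
  by_cases hdisj : Disjoint O S
  swap
  · obtain ⟨x, hxO, hxS⟩ := Set.not_disjoint_iff.1 hdisj
    obtain ⟨v, hv, rfl⟩ := hxS
    have hv1 : ‖v‖ ≤ 1 := by
      simpa [dist_zero_right] using Metric.mem_closedBall.1 hv
    have hcoord : ∀ i, 1 - δ < T v i := fun i => hxO i (Set.mem_univ i)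
    refine ⟨v, hv1, ?_, ?_⟩
    · have h0 := hcoord 0
      simp only [hT, LinearMap.pi_apply, ContinuousLinearMap.coe_coe, hf,
        Fin.cases_zero] at h0
      exact h0.le
    · intro k hk
      have hk0 := hcoord ((⟨k, hk⟩ : Fin N).succ)
      simp only [hT, LinearMap.pi_apply, ContinuousLinearMap.coe_coe, hf,
        Fin.cases_succ] at hk0
      exact hk0.le
  · exfalso
    obtain ⟨φ, u, hφO, hφS⟩ := geometric_hahn_banach_open hOconv hOopen hSconv hdisj
    have hu0 : u ≤ 0 := by
      have h0S : (0 : Fin (N+1) → ℝ) ∈ S :=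
        ⟨0, Metric.mem_closedBall_self (by norm_num), by simp⟩
      simpa using hφS 0 h0S
    set sing : Fin (N+1) → (Fin (N+1) → ℝ) := fun i => Pi.single i (1:ℝ) with hsing
    set lam : Fin (N+1) → ℝ := fun i => -φ (sing i) with hlam
    have hlamnn : ∀ i, 0 ≤ lam i := by
      intro i
      by_contra hneg
      push_neg at hneg
      have hφpos : 0 < φ (sing i) := by
        simp only [hlam] at hneg; linarith
      set t : ℝ := (1 + |φ (fun _ => 1)|) / φ (sing i) with ht
      have htpos : 0 < t := div_pos (by positivity) hφpos
      have hmem : ((fun _ => (1:ℝ)) + t • sing i) ∈ O := by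
        intro i' _
        simp only [Pi.add_apply, Pi.smul_apply, smul_eq_mul, Set.mem_Ioi]
        have hnn : (0:ℝ) ≤ t * sing i i' := by
          refine mul_nonneg htpos.le ?_
          simp only [hsing, Pi.single_apply]
          split <;> norm_num
        linarith
      have hlt := hφO _ hmem
      rw [map_add, map_smul, smul_eq_mul] at hlt
      rw [ht, div_mul_cancel₀ _ hφpos.ne'] at hlt
      have habs : -|φ (fun _ : Fin (N+1) => (1:ℝ))| ≤ φ (fun _ => 1) := neg_abs_le _
      linarith
    have hdecomp : ∀ x : Fin (N+1) → ℝ, φ x = ∑ i, x i * φ (sing i) := by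
      intro x
      have hx : x = ∑ i, x i • sing i := by
        funext j
        simp [hsing, Finset.sum_apply, Pi.single_apply, mul_ite, Finset.sum_ite_eq]
      conv_lhs => rw [hx]
      rw [map_sum]
      exact Finset.sum_congr rfl fun i _ => by rw [map_smul, smul_eq_mul]
    set F : StrongDual ℝ X := ∑ i, lam i • f i with hF
    have hFapp : ∀ v, F v = ∑ i, lam i * f i v := by
      intro v
      simp [hF, ContinuousLinearMap.sum_apply, ContinuousLinearMap.smul_apply, smul_eq_mul]
    have hFle : ∀ v : X, ‖v‖ ≤ 1 → F v ≤ -u := by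
      intro v hv
      have hvS : T v ∈ S :=
        ⟨v, by simpa [Metric.mem_closedBall, dist_zero_right] using hv, rfl⟩
      have h1 := hφS _ hvS
      rw [hdecomp (T v)] at h1
      have h2 : u ≤ ∑ i, (f i v) * φ (sing i) := by
        simpa [hT, LinearMap.pi_apply, ContinuousLinearMap.coe_coe] using h1
      have heq : ∑ i, (f i v) * φ (sing i) = -F v := by
        rw [hFapp, ← Finset.sum_neg_distrib]
        refine Finset.sum_congr rfl fun i _ => ?_
        simp only [hlam]
        ring
      rw [heq] at h2
      linarith
    have hFnorm : ‖F‖ ≤ -u := opnorm_le_of_forall_le (by linarith) hFle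
    set L : ℝ := ∑ i, lam i with hL
    have hLnn : 0 ≤ L := Finset.sum_nonneg fun i _ => hlamnn i
    have hOside : ∀ t, 0 < t → -u < (1 - δ + t) * L := by
      intro t ht
      have hmem : (fun _ : Fin (N+1) => (1 - δ + t)) ∈ O := by
        intro i _
        simp only [Set.mem_Ioi]
        linarith
      have h1 := hφO _ hmem
      rw [hdecomp] at h1
      have heq : ∑ i : Fin (N+1), (1-δ+t) * φ (sing i) = -((1-δ+t) * L) := by
        rw [hL, Finset.mul_sum, ← Finset.sum_neg_distrib]
        refine Finset.sum_congr rfl fun i _ => ?_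
        simp only [hlam]
        ring
      rw [heq] at h1
      linarith
    rcases eq_or_lt_of_le hLnn with hL0 | hLpos
    · have := hOside 1 one_pos
      rw [← hL0, mul_zero] at this
      linarith
    · -- identify ‖F‖ = L
      set c : ℕ → ℝ := fun k => if h : k < N then lam (Fin.succ ⟨k, h⟩) else 0 with hc
      have hcnn : ∀ k, 0 ≤ c k := by
        intro k
        by_cases h : k < N
        · simp only [hc, dif_pos h]; exact hlamnn _
        · simp [hc, h]
      have hsumeq : ∑ j : Fin N, lam j.succ • b j = ∑ k ∈ Finset.range N, c k • b k := by
        rw [← Fin.sum_univ_eq_sum_range (fun k => c k • b k) N]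
        refine Finset.sum_congr rfl fun j _ => ?_
        congr 1
        simp only [hc, dif_pos j.isLt]
      have hFeq : F = e.symm (lam 0 • estar + ∑ k ∈ Finset.range N, c k • basisv (n k)) := by
        have hrhs : e.symm (lam 0 • estar + ∑ k ∈ Finset.range N, c k • basisv (n k))
            = lam 0 • a + ∑ k ∈ Finset.range N, c k • b k := by
          rw [map_add, LinearIsometryEquiv.map_smul, map_sum]
          simp only [LinearIsometryEquiv.map_smul, hb, ha]
        rw [hrhs, hF, Fin.sum_univ_succ, ← hsumeq, hf0]
        congr 1
      have hnormF : ‖F‖ = lam 0 + ∑ k ∈ Finset.range N, c k := by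
        rw [hFeq, LinearIsometryEquiv.norm_map]
        exact norm_combo n hinj estar hnorm hpos (hlamnn 0) N hcnn
      have hLeq : L = lam 0 + ∑ k ∈ Finset.range N, c k := by
        rw [hL, Fin.sum_univ_succ]
        congr 1
        rw [← Fin.sum_univ_eq_sum_range (fun k => c k) N]
        refine Finset.sum_congr rfl fun j _ => ?_
        simp only [hc, dif_pos j.isLt]
      exact aux_arith L u δ hδ hLpos (le_of_eq_of_le (hLeq.trans hnormF.symm) hFnorm) hOside

lemma aux2 (ε' δ' M : ℝ) (hM : 0 ≤ M) (hδ : 0 ≤ δ')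
    (h : -M + (1-2*δ')*(1-M) < 1-ε'+δ') : ε' - 3*δ' < 2*M := by
  nlinarith [mul_nonneg hδ hM]

theorem stmt9 (X : Type*) [NormedAddCommGroup X] [NormedSpace ℝ X] [CompleteSpace X]
    (e : StrongDual ℝ X ≃ₗᵢ[ℝ] ell1) (n : ℕ → ℕ) (hn : StrictMono n)
    (estar : ell1) (hnorm : ‖estar‖ = 1)
    (hconv : ∀ v : X,
      Tendsto (fun k => (e.symm (basisv (n k))) v) atTop (𝓝 ((e.symm estar) v)))
    (hpos : ∀ k, 0 ≤ estar (n k)) :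
    ∀ y ∈ @closure _ (wstar X e)
        (convexHull ℝ ({estar} ∪ Set.range fun k => basisv (n k))),
      ‖y‖ = 1 := by
  classical
  letI : TopologicalSpace ell1 := wstar X e
  have hcont : ∀ v : X, Continuous fun z : ell1 => (e.symm z) v := by
    intro v
    have h1 : Continuous fun z : ell1 => StrongDual.toWeakDual (e.symm z) :=
      continuous_induced_dom
    exact (WeakDual.eval_continuous v).comp h1
  intro y hy
  set G : Set ell1 := {estar} ∪ Set.range fun k => basisv (n k) with hG
  set S : Set ell1 := convexHull ℝ G with hS
  have hgen_norm : ∀ z ∈ G, ‖z‖ ≤ 1 := by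
    rintro z (rfl | ⟨k, rfl⟩)
    · exact hnorm.le
    · exact (norm_basisv _).le
  have hSball : ∀ z ∈ S, ‖z‖ ≤ 1 := by
    intro z hz
    have hsub : S ⊆ Metric.closedBall (0 : ell1) 1 := by
      rw [hS]
      refine convexHull_min ?_ (convex_closedBall 0 1)
      intro w hw
      rw [Metric.mem_closedBall, dist_zero_right]
      exact hgen_norm w hw
    have := hsub hz
    rwa [Metric.mem_closedBall, dist_zero_right] at this
  have happ_le : ∀ (z : ell1) (v : X), ‖z‖ ≤ 1 → ‖v‖ ≤ 1 → (e.symm z) v ≤ 1 := by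
    intro z v hz hv
    calc (e.symm z) v ≤ ‖(e.symm z) v‖ := Real.le_norm_self _
      _ ≤ ‖e.symm z‖ * ‖v‖ := ContinuousLinearMap.le_opNorm _ _
      _ ≤ 1 := by
          rw [LinearIsometryEquiv.norm_map]
          exact mul_le_one₀ hz (norm_nonneg _) hv
  have hyub : ∀ v : X, ‖v‖ ≤ 1 → (e.symm y) v ≤ 1 := by
    intro v hv
    have hclosed : IsClosed {z : ell1 | (e.symm z) v ≤ 1} :=
      IsClosed.preimage (hcont v) isClosed_Iic
    have hsub : S ⊆ {z : ell1 | (e.symm z) v ≤ 1} := fun z hz =>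
      happ_le z v (hSball z hz) hv
    exact (hclosed.closure_subset_iff.2 hsub) hy
  have hyle : ‖y‖ ≤ 1 := by
    rw [← LinearIsometryEquiv.norm_map e.symm y]
    exact opnorm_le_of_forall_le zero_le_one hyub
  refine le_antisymm hyle ?_
  by_contra hlt0
  push_neg at hlt0
  set ε : ℝ := 1 - ‖y‖ with hε
  have hεpos : 0 < ε := by simp only [hε]; linarith
  set δ : ℝ := ε/8 with hδdef
  have hδpos : 0 < δ := by positivity
  have hinj := hn.injective
  -- the iterative construction
  have step : ∀ M : ℕ, ∃ (v : X) (M' : ℕ), M < M' ∧ ‖v‖ ≤ 1 ∧ 1-δ ≤ (e.symm estar) v ∧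
      (∀ k, k < M → 1-δ ≤ (e.symm (basisv (n k))) v) ∧
      (∀ k, M' ≤ k → 1-2*δ ≤ (e.symm (basisv (n k))) v) := by
    intro M
    obtain ⟨v, hv1, hv2, hv3⟩ := exists_good_v X e n hinj estar hnorm hpos hδpos M
    have hev : ∀ᶠ k in atTop, (e.symm estar) v - δ < (e.symm (basisv (n k))) v :=
      (hconv v).eventually (eventually_gt_nhds (by linarith))
    obtain ⟨M0, hM0⟩ := eventually_atTop.1 hev
    refine ⟨v, max M0 (M+1), lt_of_lt_of_le (Nat.lt_succ_self M) (le_max_right _ _),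
      hv1, hv2, hv3, fun k hk => ?_⟩
    have := hM0 k (le_trans (le_max_left _ _) hk)
    linarith
  choose vf nxt hstep1 hstep2 hstep3 hstep4 hstep5 using step
  set K : ℕ → ℕ := fun i => nxt^[i] 0 with hKdef
  have hKsucc : ∀ i, K (i+1) = nxt (K i) := fun i => Function.iterate_succ_apply' nxt i 0
  have hKmono : StrictMono K := strictMono_nat_of_lt_succ fun i => by
    rw [hKsucc]; exact hstep1 (K i)
  set v : ℕ → X := fun i => vf (K i) with hvdef
  set m : ℕ := ⌈16/(5*ε)⌉₊ + 1 with hm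
  have hmgt : 1 < (m:ℝ) * (5*ε/16) := by
    have h := Nat.le_ceil (16/(5*ε))
    have h2 : 16/(5*ε) < (m:ℝ) := by
      rw [hm]; push_cast; linarith
    calc (1:ℝ) = (16/(5*ε)) * (5*ε/16) := by field_simp
      _ < (m:ℝ) * (5*ε/16) := mul_lt_mul_of_pos_right h2 (by positivity)
  set U : Set ell1 := ⋂ j ∈ Finset.range m, {z : ell1 | (e.symm z) (v j) < 1 - ε + δ} with hU
  have hUopen : IsOpen U := isOpen_biInter_finset fun j _ =>
    IsOpen.preimage (hcont (v j)) isOpen_Iio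
  have hyU : y ∈ U := by
    rw [hU]
    refine Set.mem_iInter₂.2 fun j _ => ?_
    have h1 : (e.symm y) (v j) ≤ ‖y‖ := by
      calc (e.symm y) (v j) ≤ ‖(e.symm y) (v j)‖ := Real.le_norm_self _
        _ ≤ ‖e.symm y‖ * ‖v j‖ := ContinuousLinearMap.le_opNorm _ _
        _ ≤ ‖y‖ := by
            rw [LinearIsometryEquiv.norm_map]
            exact mul_le_of_le_one_right (norm_nonneg _) (hstep2 (K j))
    simp only [Set.mem_setOf_eq]
    have : ‖y‖ = 1 - ε := by rw [hε]; ring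
    linarith
  obtain ⟨z, hzU, hzS⟩ := _root_.mem_closure_iff.1 hy U hUopen hyU
  rw [hS, convexHull_eq] at hzS
  obtain ⟨ι, t, w, gen, hw0, hw1, hgenmem, hzeq⟩ := hzS
  rw [Finset.centerMass_eq_of_sum_1 _ _ hw1] at hzeq
  -- classification
  set τ : ι → Option ℕ := fun i =>
    if h : ∃ k, gen i = basisv (n k) then some h.choose else none with hτ
  have hτsome : ∀ i k, τ i = some k → gen i = basisv (n k) := by
    intro i k h
    by_cases h' : ∃ k, gen i = basisv (n k)
    · rw [hτ] at h; simp only [dif_pos h'] at h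
      rw [← Option.some_inj.1 h]; exact h'.choose_spec
    · rw [hτ] at h; simp only [dif_neg h'] at h; exact absurd h (by simp)
  have hτnone : ∀ i ∈ t, τ i = none → gen i = estar := by
    intro i hi h
    rcases hgenmem i hi with he | ⟨k, hk⟩
    · exact he
    · exfalso
      have hex : ∃ k', gen i = basisv (n k') := ⟨k, hk.symm⟩
      rw [hτ] at h
      simp only [dif_pos hex] at h
      exact absurd h (by simp)
  set P : ℕ → ι → Prop := fun j i => ∃ k, τ i = some k ∧ K j ≤ k ∧ k < K (j+1) with hP
  set Mass : ℕ → ℝ := fun j => ∑ i ∈ t.filter (P j), w i with hMass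
  have hM0 : ∀ j, 0 ≤ Mass j := fun j =>
    Finset.sum_nonneg fun i hi => hw0 i (Finset.mem_filter.1 hi).1
  have hMest : ∀ j, j < m → 5*ε/16 < Mass j := by
    intro j hj
    have hvnorm : ‖v j‖ ≤ 1 := hstep2 (K j)
    have hlow : ∀ i ∈ t, (if P j i then (-1:ℝ) else (1-2*δ)) ≤ (e.symm (gen i)) (v j) := by
      intro i hi
      by_cases hp : P j i
      · rw [if_pos hp]
        have habs : ‖(e.symm (gen i)) (v j)‖ ≤ 1 := by
          calc ‖(e.symm (gen i)) (v j)‖ ≤ ‖e.symm (gen i)‖ * ‖v j‖ :=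
              ContinuousLinearMap.le_opNorm _ _
            _ ≤ 1 := by
                rw [LinearIsometryEquiv.norm_map]
                exact mul_le_one₀ (hgen_norm (gen i) (hgenmem i hi)) (norm_nonneg _) hvnorm
        rw [Real.norm_eq_abs] at habs
        have := neg_abs_le ((e.symm (gen i)) (v j))
        linarith
      · rw [if_neg hp]
        cases hτo : τ i with
        | none =>
          rw [hτnone i hi hτo]
          have := hstep3 (K j)
          linarith
        | some k =>
          rw [hτsome i k hτo]
          have hk : k < K j ∨ K (j+1) ≤ k := by
            by_contra hcon
            push_neg at hcon
            exact hp ⟨k, hτo, hcon.1, hcon.2⟩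
          rcases hk with hk | hk
          · have := hstep4 (K j) k hk
            linarith
          · have := hstep5 (K j) k (by rw [← hKsucc]; exact hk)
            exact this
    have hzsum : (e.symm z) (v j) = ∑ i ∈ t, w i * (e.symm (gen i)) (v j) := by
      calc (e.symm z) (v j) = (e.symm (∑ i ∈ t, w i • gen i)) (v j) := by rw [hzeq]
        _ = (∑ i ∈ t, w i • e.symm (gen i)) (v j) := by
            rw [map_sum]
            simp only [LinearIsometryEquiv.map_smul]
        _ = ∑ i ∈ t, w i * (e.symm (gen i)) (v j) := by
            rw [ContinuousLinearMap.sum_apply]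
            simp only [ContinuousLinearMap.coe_smul', Pi.smul_apply, smul_eq_mul]
    have hsum1 : ∑ i ∈ t, w i * (if P j i then (-1:ℝ) else (1-2*δ)) ≤ (e.symm z) (v j) := by
      rw [hzsum]
      exact Finset.sum_le_sum fun i hi => mul_le_mul_of_nonneg_left (hlow i hi) (hw0 i hi)
    have hzup : (e.symm z) (v j) < 1 - ε + δ := by
      have := Set.mem_iInter₂.1 (hU ▸ hzU) j (Finset.mem_range.2 hj)
      exact this
    have hrest : ∑ i ∈ t.filter (fun i => ¬ P j i), w i = 1 - Mass j := by
      have := Finset.sum_filter_add_sum_filter_not t (P j) w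
      rw [hw1] at this
      rw [hMass]
      linarith [this]
    have hsplit : ∑ i ∈ t, w i * (if P j i then (-1:ℝ) else (1-2*δ))
        = -(Mass j) + (1-2*δ) * (1 - Mass j) := by
      rw [← Finset.sum_filter_add_sum_filter_not t (P j)
        (fun i => w i * (if P j i then (-1:ℝ) else (1-2*δ)))]
      have e1 : ∑ i ∈ t.filter (P j), w i * (if P j i then (-1:ℝ) else (1-2*δ))
          = -(Mass j) := by
        rw [hMass, ← Finset.sum_neg_distrib]
        refine Finset.sum_congr rfl fun i hi => ?_
        rw [if_pos (Finset.mem_filter.1 hi).2]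
        ring
      have e2 : ∑ i ∈ t.filter (fun i => ¬ P j i), w i * (if P j i then (-1:ℝ) else (1-2*δ))
          = (1-2*δ) * (1 - Mass j) := by
        rw [← hrest, Finset.mul_sum]
        refine Finset.sum_congr rfl fun i hi => ?_
        rw [if_neg (Finset.mem_filter.1 hi).2]
        ring
      rw [e1, e2]
    rw [hsplit] at hsum1
    have hbig : -(Mass j) + (1-2*δ) * (1 - Mass j) < 1 - ε + δ := lt_of_le_of_lt hsum1 hzup
    have hkey : ε - 3*δ < 2*(Mass j) := aux2 ε δ (Mass j) (hM0 j) hδpos.le hbig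
    rw [hδdef] at hkey
    linarith
  -- disjointness of the filters and conclusion
  have hpair : (↑(Finset.range m) : Set ℕ).PairwiseDisjoint
      (fun j => t.filter (P j)) := by
    intro j _ j' _ hne
    simp only [Function.onFun]
    rw [Finset.disjoint_left]
    intro i hi hi'
    obtain ⟨k, hτk, hk1, hk2⟩ := (Finset.mem_filter.1 hi).2
    obtain ⟨k', hτk', hk1', hk2'⟩ := (Finset.mem_filter.1 hi').2
    have hkk : k = k' := Option.some_inj.1 (hτk ▸ hτk')
    subst hkk
    rcases lt_or_gt_of_ne hne with h | h
    · have : K (j+1) ≤ K j' := hKmono.monotone (Nat.succ_le_of_lt h)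
      omega
    · have : K (j'+1) ≤ K j := hKmono.monotone (Nat.succ_le_of_lt h)
      omega
  have htotal : ∑ j ∈ Finset.range m, Mass j ≤ 1 := by
    rw [← hw1]
    have heq : ∑ j ∈ Finset.range m, Mass j
        = ∑ i ∈ (Finset.range m).biUnion (fun j => t.filter (P j)), w i := by
      rw [Finset.sum_biUnion hpair]
    rw [heq]
    refine Finset.sum_le_sum_of_subset_of_nonneg ?_ (fun i hi _ => hw0 i hi)
    intro i hi
    obtain ⟨j, _, hj⟩ := Finset.mem_biUnion.1 hi
    exact (Finset.mem_filter.1 hj).1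
  have hlower : (m:ℝ) * (5*ε/16) < ∑ j ∈ Finset.range m, Mass j := by
    have hne : (Finset.range m).Nonempty := ⟨0, Finset.mem_range.2 (by omega)⟩
    have := Finset.sum_lt_sum_of_nonempty hne
      (f := fun _ => 5*ε/16) (g := fun j => Mass j)
      (fun j hj => hMest j (Finset.mem_range.1 hj))
    simpa [Finset.sum_const, Finset.card_range, nsmul_eq_mul] using this
  exact absurd htotal (not_le.2 (hmgt.trans hlower))
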